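/- Let p be a prime and a_1, ..., a_n integers with a_n ≠ 0 and p > |a_1| + |a_2| + ... + |a_n|. Then the polynomial a_n x^n + ... + a_1 x + p is irreducible over Z. -/

import Mathlib

open Polynomial

lemma aux_multiset_prod_gt_one (s : Multiset ℝ) (hs : ∀ x ∈ s, 1 < x) (hne : s ≠ 0) :
    1 < s.prod := by
  induction s using Multiset.induction_on with
  | empty => exact absurd rfl hne
  | cons a t ih =>
    rcases eq_or_ne t 0 with rfl | ht
    · simpa using hs a (by simp)
    · have ha := hs a (by simp)
      have h1 : 1 < t.prod := ih (fun x hx => hs x (by simp [hx])) ht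
      rw [Multiset.prod_cons]
      nlinarith

lemma aux_factor_isUnit (f g : ℤ[X]) (hfne : f ≠ 0) (hdvd : g ∣ f)
    (hroot : ∀ z : ℂ, (f.map (Int.castRingHom ℂ)).eval z = 0 → 1 < ‖z‖)
    (hg0 : (g.eval 0).natAbs = 1) : IsUnit g := by
  have hgne : g ≠ 0 := fun h => hfne (eq_zero_of_zero_dvd (h ▸ hdvd))
  by_cases hdeg : g.natDegree = 0
  · rw [Polynomial.eq_C_of_natDegree_eq_zero hdeg]
    rw [isUnit_C, Int.isUnit_iff]
    rcases Int.natAbs_eq_iff.mp hg0 with h | h <;> simp [coeff_zero_eq_eval_zero, h]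
  · exfalso
    set G : ℂ[X] := g.map (Int.castRingHom ℂ) with hG
    have hGne : G ≠ 0 := (Polynomial.map_ne_zero_iff (Int.cast_injective)).mpr hgne
    have hsplit : G.Splits := IsAlgClosed.splits G
    have heq := hsplit.eq_prod_roots
    have hev : G.eval 0 = ((g.eval 0 : ℤ) : ℂ) := by
      rw [hG, Polynomial.eval_map, Polynomial.eval₂_at_zero, coeff_zero_eq_eval_zero]
      rfl
    have habs : ‖G.eval 0‖ = 1 := by
      rw [hev, Complex.norm_intCast, ← Int.cast_abs, Int.abs_eq_natAbs, hg0]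
      norm_num
    have hcard : G.roots.card = G.natDegree := Polynomial.splits_iff_card_roots.mp hsplit
    have hdegG : G.natDegree = g.natDegree :=
      Polynomial.natDegree_map_eq_of_injective Int.cast_injective g
    have hroots_ne : G.roots ≠ 0 := by
      intro h
      rw [h] at hcard
      simp [hdegG] at hcard
      omega
    have hbig : ∀ r ∈ G.roots, 1 < ‖r‖ := by
      intro r hr
      apply hroot
      obtain ⟨h, rfl⟩ := hdvd
      rw [Polynomial.map_mul, eval_mul, ← hG, Polynomial.isRoot_of_mem_roots hr, zero_mul]
    have hev2 : ‖G.eval 0‖ =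
        ‖G.leadingCoeff‖ * (G.roots.map (fun r => ‖r‖)).prod := by
      conv_lhs => rw [heq]
      rw [eval_mul, eval_C, norm_mul, Polynomial.eval_multiset_prod]
      congr 1
      rw [Multiset.map_map, (show ∀ s : Multiset ℂ, ‖s.prod‖ = (s.map (fun x => ‖x‖)).prod from fun s => map_multiset_prod (normHom : ℂ →*₀ ℝ) s), Multiset.map_map]
      congr 1
      apply Multiset.map_congr rfl
      intro r _
      simp
    have hlead1 : 1 ≤ ‖G.leadingCoeff‖ := by
      have : G.leadingCoeff = ((g.leadingCoeff : ℤ) : ℂ) := by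
        rw [hG, Polynomial.leadingCoeff_map_of_leadingCoeff_ne_zero]
        · rfl
        · simpa using Polynomial.leadingCoeff_ne_zero.mpr hgne
      rw [this, Complex.norm_intCast, ← Int.cast_abs]
      exact_mod_cast Int.one_le_abs (Polynomial.leadingCoeff_ne_zero.mpr hgne)
    have hprod : 1 < (G.roots.map (fun r => ‖r‖)).prod := by
      apply aux_multiset_prod_gt_one
      · intro x hx
        obtain ⟨r, hr, rfl⟩ := Multiset.mem_map.mp hx
        exact hbig r hr
      · simpa using hroots_ne
    nlinarith [hev2, habs]

theorem stmt_5 (p : ℕ) (hp : p.Prime) (m : ℕ) (a : Fin (m + 1) → ℤ)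
    (hlead : a (Fin.last m) ≠ 0)
    (hdom : (p : ℤ) > ∑ i, |a i|)
    (f : ℤ[X]) (hf : f = C (p : ℤ) + ∑ i, C (a i) * X ^ ((i : ℕ) + 1)) :
    Irreducible f := by
  have hev0 : f.eval 0 = p := by rw [hf]; simp [eval_finset_sum]
  have hcoeff : f.coeff (m + 1) = a (Fin.last m) := by
    rw [hf, coeff_add, finset_sum_coeff]
    simp only [coeff_C_mul, coeff_X_pow]
    rw [coeff_C, if_neg (by omega), Finset.sum_eq_single (Fin.last m)]
    · simp [Fin.last]
    · intro b _ hb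
      rw [if_neg, mul_zero]
      intro h
      exact hb (by ext; simpa [Fin.last] using h.symm)
    · simp
  have hfne : f ≠ 0 := by
    intro h
    rw [h] at hev0
    simp at hev0
    exact hp.ne_zero (by exact_mod_cast hev0.symm)
  have hroot : ∀ z : ℂ, (f.map (Int.castRingHom ℂ)).eval z = 0 → 1 < ‖z‖ := by
    intro z hz
    by_contra hle
    push_neg at hle
    rw [hf] at hz
    simp only [Polynomial.map_add, Polynomial.map_sum, Polynomial.map_mul, Polynomial.map_pow,
      map_C, map_X, eval_add, eval_finset_sum, eval_mul, eval_pow, eval_C, eval_X,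
      eq_intCast, Int.cast_natCast, Polynomial.map_intCast, Polynomial.map_natCast,
      Polynomial.eval_intCast, Polynomial.eval_natCast] at hz
    have h1 : (p : ℂ) = -(∑ i : Fin (m+1), (a i : ℂ) * z ^ ((i:ℕ) + 1)) := by
      linear_combination hz
    have h2 : (p : ℝ) = ‖(∑ i : Fin (m+1), (a i : ℂ) * z ^ ((i:ℕ) + 1))‖ := by
      rw [← norm_neg, ← h1]
      simp
    have h3 : ‖∑ i : Fin (m+1), (a i : ℂ) * z ^ ((i:ℕ) + 1)‖ ≤
        ∑ i : Fin (m+1), (|a i| : ℝ) := by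
      refine le_trans (norm_sum_le _ _) (Finset.sum_le_sum fun i _ => ?_)
      rw [norm_mul, norm_pow]
      have h4 : ‖z‖ ^ ((i:ℕ)+1) ≤ 1 := pow_le_one₀ (norm_nonneg _) hle
      have h5 : ‖(a i : ℂ)‖ = (|a i| : ℝ) := by
        rw [Complex.norm_intCast]
      nlinarith [norm_nonneg (a i : ℂ), abs_nonneg (a i)]
    have h6 : ((∑ i, |a i| : ℤ) : ℝ) < (p : ℝ) := by exact_mod_cast hdom
    rw [Int.cast_sum] at h6
    simp only [Int.cast_abs] at h6
    linarith [h2.le.trans h3]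
  constructor
  · intro hu
    have h0 : f.natDegree = 0 := Polynomial.natDegree_eq_zero_of_isUnit hu
    have : f.coeff (m + 1) = 0 := Polynomial.coeff_eq_zero_of_natDegree_lt (by omega)
    rw [hcoeff] at this
    exact hlead this
  · intro g h hgh
    have hmul : (g.eval 0).natAbs * (h.eval 0).natAbs = p := by
      rw [← Int.natAbs_mul, ← eval_mul, ← hgh, hev0, Int.natAbs_natCast]
    rcases hp.eq_one_or_self_of_dvd (g.eval 0).natAbs ⟨_, hmul.symm⟩ with h1 | h1
    · exact Or.inl (aux_factor_isUnit f g hfne ⟨h, hgh⟩ hroot h1)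
    · right
      apply aux_factor_isUnit f h hfne ⟨g, by rw [hgh, mul_comm]⟩ hroot
      rw [h1] at hmul
      have hppos := hp.pos
      have := Nat.eq_of_mul_eq_mul_left hppos (hmul.trans (mul_one p).symm)
      exact this
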